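/- Let F be a strictly 1-balanced graph on r ≥ 3 vertices, let P be a clean F-path with F-edges h_1,…,h_ℓ, and let S be a connected subgraph of the shadow graph of P with at least 2 vertices that contains all overlap vertices of P and satisfies v(S ∩ h_i) ≥ 2 for all i, where S ∩ h_i is the graph with vertex set V(S) ∩ V(h_i) and edge set E(S) ∩ E(h_i). Then d_1(S) = Σ_i e(S ∩ h_i)/(v(S)−1) ≤ d_1(F), and consequently e(S)/v(S) < d_1(F). -/

import Mathlib

open scoped Classical
open Filter Asymptotics

noncomputable section

/-! ### Basic graph quantities -/

/-- The number of edges of a simple graph. -/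
def edgeCnt {V : Type*} (G : SimpleGraph V) : ℕ := G.edgeSet.ncard

/-- The 1-density `e(F)/(v(F)-1)` of a graph `F` on `r` vertices. -/
def d1 {r : ℕ} (F : SimpleGraph (Fin r)) : ℝ := (edgeCnt F : ℝ) / ((r : ℝ) - 1)

/-- `F` is strictly 1-balanced: every proper subgraph `S` with at least 2 vertices and at
least one edge satisfies `d₁(S) < d₁(F)`. -/
def Strictly1Balanced {r : ℕ} (F : SimpleGraph (Fin r)) : Prop :=
  ∀ S : F.Subgraph, S ≠ ⊤ → 2 ≤ S.verts.ncard → 1 ≤ S.edgeSet.ncard →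
    (S.edgeSet.ncard : ℝ) / ((S.verts.ncard : ℝ) - 1) < d1 F

/-- The number of automorphisms of `F`. -/
def autCard {r : ℕ} (F : SimpleGraph (Fin r)) : ℕ := Nat.card (F ≃g F)

/-! ### Copies of `F` in a graph, `F`-factors, `F`-isolated vertices -/

/-- `φ` is a copy of `F` in `G` (an embedding of `F` as a not necessarily induced subgraph). -/
def IsCopyIn {r n : ℕ} (F : SimpleGraph (Fin r)) (G : SimpleGraph (Fin n))
    (φ : Fin r ↪ Fin n) : Prop :=
  ∀ u v, F.Adj u v → G.Adj (φ u) (φ v)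

/-- `G` contains an `F`-factor: pairwise vertex-disjoint copies of `F` covering all vertices. -/
def HasFFactor {r n : ℕ} (F : SimpleGraph (Fin r)) (G : SimpleGraph (Fin n)) : Prop :=
  ∃ Φ : Finset (Fin r ↪ Fin n),
    (∀ φ ∈ Φ, IsCopyIn F G φ) ∧
    (∀ φ ∈ Φ, ∀ ψ ∈ Φ, φ ≠ ψ → ∀ x : Fin n, ¬(x ∈ Set.range φ ∧ x ∈ Set.range ψ)) ∧
    (∀ x : Fin n, ∃ φ ∈ Φ, x ∈ Set.range φ)

/-- Vertex `x` is `F`-isolated in `G`: no copy of `F` in `G` contains `x`. -/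
def FIsolated {r n : ℕ} (F : SimpleGraph (Fin r)) (G : SimpleGraph (Fin n)) (x : Fin n) : Prop :=
  ∀ φ : Fin r ↪ Fin n, IsCopyIn F G φ → x ∉ Set.range φ

/-! ### The random graph `G(n,p)` -/

/-- Probability of the event `P` in the Erdős–Rényi random graph `G(n,p)`. -/
def gnpProb (n : ℕ) (p : ℝ) (P : SimpleGraph (Fin n) → Prop) : ℝ :=
  ∑ G : SimpleGraph (Fin n),
    if P G then p ^ edgeCnt G * (1 - p) ^ (n.choose 2 - edgeCnt G) else 0

/-- The sharp threshold `p* = ((aut F / r!) · ln n / C(n-1, r-1))^(1/e(F))`. -/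
def pstar {r : ℕ} (F : SimpleGraph (Fin r)) (n : ℕ) : ℝ :=
  ((autCard F : ℝ) / (r.factorial : ℝ) * Real.log n / ((n - 1).choose (r - 1) : ℝ)) ^
    ((1 : ℝ) / (edgeCnt F : ℝ))

/-! ### `F`-edges and `F`-graphs -/

/-- An `F`-edge: a pair (vertex set, edge set); the copies of `F` among these are singled out
by `FEdge.IsCopyOf`. -/
abbrev FEdge (V : Type*) := Finset V × Finset (Sym2 V)

/-- `h` is a copy of `F` with vertices in `V`. -/
def FEdge.IsCopyOf {r : ℕ} {V : Type*} (h : FEdge V) (F : SimpleGraph (Fin r)) : Prop :=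
  ∃ φ : Fin r → V, Function.Injective φ ∧ (↑h.1 : Set V) = Set.range φ ∧
    (↑h.2 : Set (Sym2 V)) = Sym2.map φ '' F.edgeSet

/-- An `F`-graph: a vertex set together with a set of `F`-edges. -/
abbrev FGraph (V : Type*) := Finset V × Finset (FEdge V)

/-- Well-formedness of an `F`-graph w.r.t. `F`: every `F`-edge is a copy of `F` with
vertices inside the vertex set. -/
def FGraph.Wf {r : ℕ} {V : Type*} (H : FGraph V) (F : SimpleGraph (Fin r)) : Prop :=
  ∀ h ∈ H.2, FEdge.IsCopyOf h F ∧ h.1 ⊆ H.1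

/-- The edge set of the shadow graph of an `F`-graph. -/
def shadowEdges {V : Type*} [DecidableEq V] (H : FGraph V) : Finset (Sym2 V) :=
  H.2.sup Prod.snd

/-- The shadow graph of an `F`-graph. -/
def shadow {V : Type*} [DecidableEq V] (H : FGraph V) : SimpleGraph V :=
  SimpleGraph.fromEdgeSet ↑(shadowEdges H)

/-- Number of connected components of the shadow graph of `H` (on the vertex set of `H`). -/
def compCount {V : Type*} [DecidableEq V] (H : FGraph V) : ℕ :=
  Nat.card ((shadow H).induce (↑H.1 : Set V)).ConnectedComponent

/-- An `F`-graph is connected if its shadow graph is. -/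
def FGraphConnected {V : Type*} [DecidableEq V] (H : FGraph V) : Prop :=
  ((shadow H).induce (↑H.1 : Set V)).Connected

/-- The nullity `n(H) = (r-1)e(H) + c(H) - v(H)` of an `F`-graph. -/
def nullity (r : ℕ) {V : Type*} [DecidableEq V] (H : FGraph V) : ℤ :=
  ((r : ℤ) - 1) * H.2.card + compCount H - H.1.card

/-- An avoidable configuration: a connected `F`-graph of nullity at least 2. -/
def Avoidable {r : ℕ} {V : Type*} [DecidableEq V] (F : SimpleGraph (Fin r))
    (H : FGraph V) : Prop :=
  FGraph.Wf H F ∧ FGraphConnected H ∧ 2 ≤ nullity r H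

/-- The `F`-edge `h` is induced by the `F`-graph `H`: it is a copy of `F`, not an `F`-edge of
`H`, but all its edges lie in the shadow graph of `H`. -/
def InducedBy {r : ℕ} {V : Type*} [DecidableEq V] (F : SimpleGraph (Fin r)) (h : FEdge V)
    (H : FGraph V) : Prop :=
  FEdge.IsCopyOf h F ∧ h ∉ H.2 ∧ h.2 ⊆ shadowEdges H

/-- `C` is a clean `F`-cycle of length `k`. -/
def IsCleanCycleOfLen {r : ℕ} {V : Type*} [DecidableEq V] (F : SimpleGraph (Fin r))
    (C : FGraph V) (k : ℕ) : Prop :=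
  FGraph.Wf C F ∧ C.1 = C.2.sup Prod.fst ∧
  ((k = 2 ∧ ∃ h₁ h₂ : FEdge V, h₁ ≠ h₂ ∧ C.2 = {h₁, h₂} ∧ (h₁.1 ∩ h₂.1).card = 2) ∨
   (3 ≤ k ∧ ∃ h : Fin k → FEdge V, Function.Injective h ∧ C.2 = Finset.image h Finset.univ ∧
     ∃ v : Fin k → V, Function.Injective v ∧
       (∀ i j : Fin k, ((i : ℕ) + 1) % k = (j : ℕ) → (h i).1 ∩ (h j).1 = {v i}) ∧
       (∀ i j : Fin k, i ≠ j → ((i : ℕ) + 1) % k ≠ (j : ℕ) → ((j : ℕ) + 1) % k ≠ (i : ℕ) →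
         (h i).1 ∩ (h j).1 = ∅)))

/-- `C` is a clean `F`-cycle (of some length `k ≥ 2`). -/
def IsCleanCycle {r : ℕ} {V : Type*} [DecidableEq V] (F : SimpleGraph (Fin r))
    (C : FGraph V) : Prop :=
  ∃ k, IsCleanCycleOfLen F C k

/-- `C` is a sparse clean `F`-cycle: a clean `F`-cycle of length 2 whose two overlap vertices
form an edge of both of its `F`-edges. -/
def IsSparse {r : ℕ} {V : Type*} [DecidableEq V] (F : SimpleGraph (Fin r))
    (C : FGraph V) : Prop :=
  IsCleanCycleOfLen F C 2 ∧ ∃ h₁ h₂ : FEdge V, h₁ ≠ h₂ ∧ C.2 = {h₁, h₂} ∧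
    ∃ x y : V, x ≠ y ∧ h₁.1 ∩ h₂.1 = {x, y} ∧ s(x, y) ∈ h₁.2 ∧ s(x, y) ∈ h₂.2

/-! ### The random `F`-graph `H_F(n,π)` -/

/-- All potential `F`-edges on the vertex set `Fin n`. -/
def allFEdges (r n : ℕ) (F : SimpleGraph (Fin r)) : Finset (FEdge (Fin n)) :=
  Finset.univ.filter fun h => FEdge.IsCopyOf h F

/-- Expectation of `X` under the random `F`-graph `H_F(n,π)`, whose `F`-edge set is a random
subset of `allFEdges r n F`, each `F`-edge present independently with probability `π`. -/
def hfExp (r n : ℕ) (F : SimpleGraph (Fin r)) (π : ℝ)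
    (X : Finset (FEdge (Fin n)) → ℝ) : ℝ :=
  ∑ S ∈ (allFEdges r n F).powerset,
    π ^ S.card * (1 - π) ^ ((allFEdges r n F).card - S.card) * X S

/-- Probability of `P` under the random `F`-graph `H_F(n,π)`. -/
def hfProb (r n : ℕ) (F : SimpleGraph (Fin r)) (π : ℝ)
    (P : Finset (FEdge (Fin n)) → Prop) : ℝ :=
  hfExp r n F π fun S => if P S then 1 else 0

/-! ### Maps, isomorphisms and copies of `F`-graphs -/

/-- Image of an `F`-edge under a vertex map. -/
def FEdge.map {V W : Type*} [DecidableEq W] (ψ : V → W) (h : FEdge V) : FEdge W :=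
  (h.1.image ψ, h.2.image (Sym2.map ψ))

/-- Image of an `F`-graph under a vertex map. -/
def FGraph.map {V W : Type*} [DecidableEq V] [DecidableEq W] (ψ : V → W)
    (H : FGraph V) : FGraph W :=
  (H.1.image ψ, H.2.image (FEdge.map ψ))

/-- `H` is isomorphic to `K` via a vertex bijection mapping `F`-edges to `F`-edges. -/
def FGraph.IsoTo {V W : Type*} [DecidableEq V] [DecidableEq W] (H : FGraph V)
    (K : FGraph W) : Prop :=
  ∃ ψ : V → W, Set.InjOn ψ ↑H.1 ∧ FGraph.map ψ H = K

/-- The number of copies of the `F`-graph `H` among a set `S` of `F`-edges on `Fin n`. -/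
def copyCount {V : Type*} [DecidableEq V] (H : FGraph V) {n : ℕ}
    (S : Finset (FEdge (Fin n))) : ℕ :=
  Nat.card {K : FGraph (Fin n) // K.2 ⊆ S ∧ FGraph.IsoTo H K}

/-- Union of two `F`-graphs. -/
def FGraph.union {V : Type*} [DecidableEq V] (H K : FGraph V) : FGraph V :=
  (H.1 ∪ K.1, H.2 ∪ K.2)

/-! ### d-graphs and the random d-graph `G*(n,p)` -/

/-- A d-graph: vertices, usual edges, and dummy edges (identified with sparse clean
`F`-cycles). -/
abbrev DGraph (V : Type*) := Finset V × Finset (Sym2 V) × Finset (FGraph V)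

/-- All potential usual edges on `Fin n`. -/
def allUsual (n : ℕ) : Finset (Sym2 (Fin n)) := Finset.univ.filter fun e => ¬e.IsDiag

/-- All potential dummy edges on `Fin n`: the sparse clean `F`-cycles. -/
def allDummies (r n : ℕ) (F : SimpleGraph (Fin r)) : Finset (FGraph (Fin n)) :=
  Finset.univ.filter fun C => IsSparse F C

/-- Expectation of `X` under the random d-graph `G*(n,p)`: each usual edge and each dummy
edge is included independently with probability `p`. -/
def dgExp (r n : ℕ) (F : SimpleGraph (Fin r)) (p : ℝ)
    (X : Finset (Sym2 (Fin n)) → Finset (FGraph (Fin n)) → ℝ) : ℝ :=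
  ∑ U ∈ (allUsual n).powerset, ∑ D ∈ (allDummies r n F).powerset,
    p ^ (U.card + D.card) *
      (1 - p) ^ (((allUsual n).card - U.card) + ((allDummies r n F).card - D.card)) * X U D

/-- Probability of `P` under the random d-graph `G*(n,p)`. -/
def dgProb (r n : ℕ) (F : SimpleGraph (Fin r)) (p : ℝ)
    (P : Finset (Sym2 (Fin n)) → Finset (FGraph (Fin n)) → Prop) : ℝ :=
  dgExp r n F p fun U D => if P U D then 1 else 0

/-- Image of a d-graph under a vertex map. -/
def DGraph.map {V W : Type*} [DecidableEq V] [DecidableEq W] (ψ : V → W)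
    (K : DGraph V) : DGraph W :=
  (K.1.image ψ, K.2.1.image (Sym2.map ψ), K.2.2.image (FGraph.map ψ))

/-- `K` is isomorphic to `L` as a d-graph. -/
def DGraph.IsoTo {V W : Type*} [DecidableEq V] [DecidableEq W] (K : DGraph V)
    (L : DGraph W) : Prop :=
  ∃ ψ : V → W, Set.InjOn ψ ↑K.1 ∧ DGraph.map ψ K = L

/-- The number of copies of the d-graph `K` inside the d-graph on `Fin n` with usual edges
`U` and dummy edges `D`. -/
def dCopyCount {V : Type*} [DecidableEq V] (K : DGraph V) {n : ℕ}
    (U : Finset (Sym2 (Fin n))) (D : Finset (FGraph (Fin n))) : ℕ :=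
  Nat.card {L : DGraph (Fin n) // L.2.1 ⊆ U ∧ L.2.2 ⊆ D ∧ DGraph.IsoTo K L}

/-- Union of two d-graphs. -/
def DGraph.union {V : Type*} [DecidableEq V] (K L : DGraph V) : DGraph V :=
  (K.1 ∪ L.1, K.2.1 ∪ L.2.1, K.2.2 ∪ L.2.2)

/-- `G` is the clean d-cycle corresponding to the clean `F`-cycle `C`: the shadow graph of
`C` if `C` is dense, together with the dummy edge `C` if `C` is sparse. -/
def IsCleanDCycleOf {r : ℕ} {V : Type*} [DecidableEq V] (F : SimpleGraph (Fin r))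
    (G : DGraph V) (C : FGraph V) : Prop :=
  (IsCleanCycle F C ∧ ¬IsSparse F C ∧ G = (C.1, shadowEdges C, (∅ : Finset (FGraph V)))) ∨
  (IsSparse F C ∧ G = (C.1, shadowEdges C, ({C} : Finset (FGraph V))))



/-! ### Auxiliary lemmas for Statement 9 -/

lemma CPD_copy_edge {r : ℕ} {F : SimpleGraph (Fin r)} {V : Type*} {h : FEdge V}
    (hc : FEdge.IsCopyOf h F) {e : Sym2 V} (he : e ∈ h.2) :
    ¬ e.IsDiag ∧ ∀ x ∈ e, x ∈ h.1 := by
  obtain ⟨φ, hinj, hv, he2⟩ := hc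
  have hmem : e ∈ (↑h.2 : Set (Sym2 V)) := he
  rw [he2] at hmem
  obtain ⟨a', ha', rfl⟩ := hmem
  induction a' using Sym2.ind with
  | _ u v =>
    constructor
    · intro hd
      rw [Sym2.map_pair_eq, Sym2.mk_isDiag_iff] at hd
      exact (F.ne_of_adj ha') (hinj hd)
    · intro x hx
      rw [Sym2.map_pair_eq, Sym2.mem_iff] at hx
      rcases hx with rfl | rfl
      · have : φ u ∈ (↑h.1 : Set V) := by rw [hv]; exact ⟨u, rfl⟩
        exact this
      · have : φ v ∈ (↑h.1 : Set V) := by rw [hv]; exact ⟨v, rfl⟩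
        exact this

lemma CPD_conn_exists_adj {α : Type*} {G : SimpleGraph α} (hG : G.Connected)
    {x y : α} (hxy : x ≠ y) : ∃ a b, G.Adj a b := by
  obtain ⟨w⟩ := hG.preconnected x y
  cases w with
  | nil => exact absurd rfl hxy
  | cons hadj _ => exact ⟨_, _, hadj⟩

lemma CPD_d1_pos {r : ℕ} (hr : 3 ≤ r) {F : SimpleGraph (Fin r)} (hFconn : F.Connected) :
    0 < d1 F := by
  have h01 : (⟨0, by omega⟩ : Fin r) ≠ ⟨1, by omega⟩ := by
    intro hc
    have := congrArg Fin.val hc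
    simp at this
  obtain ⟨a, b, hab⟩ := CPD_conn_exists_adj hFconn h01
  have hpos : 0 < edgeCnt F :=
    (Set.ncard_pos (Set.toFinite _)).mpr ⟨s(a, b), hab⟩
  have hr1 : (0:ℝ) < (r:ℝ) - 1 := by
    have : (3:ℝ) ≤ (r:ℝ) := by exact_mod_cast hr
    linarith
  exact div_pos (by exact_mod_cast hpos) hr1

/-- Per-edge density bound: the part of `S` inside one copy of `F` has 1-density at most
`d₁(F)`. -/
lemma CPD_per_edge {r : ℕ} (hr : 3 ≤ r) {F : SimpleGraph (Fin r)} (hF : Strictly1Balanced F)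
    {V : Type*} [DecidableEq V] {h : FEdge V} (hc : FEdge.IsCopyOf h F)
    {W : Finset V} {E' : Finset (Sym2 V)}
    (hEin : ∀ e ∈ E', ∀ x ∈ e, x ∈ W)
    (hcap : 2 ≤ (W ∩ h.1).card) :
    ((E' ∩ h.2).card : ℝ) ≤ d1 F * (((W ∩ h.1).card : ℝ) - 1) := by
  obtain ⟨φ, hφinj, hφv, hφe⟩ := hc
  have hmemh1 : ∀ x, x ∈ h.1 ↔ ∃ u, φ u = x := by
    intro x
    rw [← Finset.mem_coe, hφv]
    exact Iff.rfl
  set S : F.Subgraph :=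
    { verts := {u | φ u ∈ W}
      Adj := fun u v => F.Adj u v ∧ s(φ u, φ v) ∈ E'
      adj_sub := fun hx => hx.1
      edge_vert := fun {u v} hx => by exact hEin _ hx.2 _ (Sym2.mem_mk_left _ _)
      symm := ⟨fun u v hx => ⟨hx.1.symm, by rw [Sym2.eq_swap]; exact hx.2⟩⟩ } with hSdef
  -- vertex count
  have hvertsEq : S.verts = ↑(Finset.univ.filter fun u => φ u ∈ W) := by
    ext u; simp [hSdef]
  have himg : Finset.image φ (Finset.univ.filter fun u => φ u ∈ W) = W ∩ h.1 := by
    ext x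
    simp only [Finset.mem_image, Finset.mem_filter, Finset.mem_univ, true_and,
      Finset.mem_inter]
    constructor
    · rintro ⟨u, hu, rfl⟩
      exact ⟨hu, (hmemh1 _).mpr ⟨u, rfl⟩⟩
    · rintro ⟨hxW, hxh⟩
      obtain ⟨u, rfl⟩ := (hmemh1 _).mp hxh
      exact ⟨u, hxW, rfl⟩
  have hvc : S.verts.ncard = (W ∩ h.1).card := by
    rw [hvertsEq, Set.ncard_coe_finset, ← himg,
      Finset.card_image_of_injective _ hφinj]
  -- edge count
  have himgE : Sym2.map φ '' S.edgeSet = ↑(E' ∩ h.2) := by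
    ext e
    simp only [Set.mem_image, Finset.coe_inter, Set.mem_inter_iff, Finset.mem_coe,
      Finset.mem_inter]
    constructor
    · rintro ⟨a, ha, rfl⟩
      induction a using Sym2.ind with
      | _ u v =>
        rw [SimpleGraph.Subgraph.mem_edgeSet] at ha
        constructor
        · rw [Sym2.map_pair_eq]; exact ha.2
        · have : Sym2.map φ s(u, v) ∈ (↑h.2 : Set (Sym2 V)) := by
            rw [hφe]; exact ⟨s(u, v), ha.1, rfl⟩
          exact this
    · rintro ⟨heE, heh⟩
      have : e ∈ (↑h.2 : Set (Sym2 V)) := heh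
      rw [hφe] at this
      obtain ⟨a, haF, rfl⟩ := this
      induction a using Sym2.ind with
      | _ u v =>
        refine ⟨s(u, v), ?_, rfl⟩
        rw [SimpleGraph.Subgraph.mem_edgeSet]
        refine ⟨haF, ?_⟩
        rwa [Sym2.map_pair_eq] at heE
  have hmapinj : Function.Injective (Sym2.map φ) := Sym2.map.injective hφinj
  have hec : S.edgeSet.ncard = (E' ∩ h.2).card := by
    rw [← Set.ncard_image_of_injective S.edgeSet hmapinj, himgE, Set.ncard_coe_finset]
  -- density facts
  have hr1 : (0:ℝ) < (r:ℝ) - 1 := by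
    have : (3:ℝ) ≤ (r:ℝ) := by exact_mod_cast hr
    linarith
  have hd1nn : 0 ≤ d1 F := div_nonneg (by positivity) (le_of_lt hr1)
  have hwR : (2:ℝ) ≤ ((W ∩ h.1).card : ℝ) := by exact_mod_cast hcap
  rcases Nat.eq_zero_or_pos S.edgeSet.ncard with h0 | hpos
  · rw [← hec, h0]
    simp only [Nat.cast_zero]
    exact mul_nonneg hd1nn (by linarith)
  · by_cases hTop : S = ⊤
    · have hvr : S.verts.ncard = r := by
        rw [hTop]
        simp [Set.ncard_univ]
      have hEr : S.edgeSet.ncard = edgeCnt F := by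
        rw [hTop, SimpleGraph.Subgraph.edgeSet_top]
        rfl
      rw [← hec, hEr, ← hvc, hvr]
      rw [d1, div_mul_cancel₀]
      exact ne_of_gt hr1
    · have hv2 : 2 ≤ S.verts.ncard := by rw [hvc]; exact hcap
      have hlt := hF S hTop hv2 hpos
      rw [hec, hvc] at hlt
      have hwpos : (0:ℝ) < ((W ∩ h.1).card : ℝ) - 1 := by linarith
      have := (div_lt_iff₀ hwpos).mp hlt
      linarith

/-- Let `P` be a clean `F`-path with `F`-edges `h 0, …, h (ℓ-1)` and let
`S = (W, E')` be a connected subgraph of the shadow graph of `P` with at least 2 vertices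
containing all overlap vertices and meeting every `h i` in at least 2 vertices. Then
`d₁(S) = Σᵢ e(S ∩ hᵢ)/(v(S)-1) ≤ d₁(F)`, and consequently `e(S)/v(S) < d₁(F)`. -/
theorem clean_path_subgraph_density {r : ℕ} (hr : 3 ≤ r) (F : SimpleGraph (Fin r))
    (hF : Strictly1Balanced F) (hFconn : F.Connected) {V : Type*} [DecidableEq V]
    (ℓ : ℕ) (hℓ : 1 ≤ ℓ) (h : Fin ℓ → FEdge V)
    (hcopies : ∀ i, FEdge.IsCopyOf (h i) F) (hinj : Function.Injective h)
    (hconsec : ∀ i j : Fin ℓ, (i : ℕ) + 1 = (j : ℕ) → ((h i).1 ∩ (h j).1).card = 1)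
    (hfar : ∀ i j : Fin ℓ, (i : ℕ) + 2 ≤ (j : ℕ) → (h i).1 ∩ (h j).1 = ∅)
    (W : Finset V) (E' : Finset (Sym2 V))
    (hWsub : W ⊆ (Finset.univ : Finset (Fin ℓ)).sup fun i => (h i).1)
    (hEsub : E' ⊆ (Finset.univ : Finset (Fin ℓ)).sup fun i => (h i).2)
    (hEin : ∀ e ∈ E', ∀ x ∈ e, x ∈ W)
    (hconn : ((SimpleGraph.fromEdgeSet (↑E' : Set (Sym2 V))).induce (↑W : Set V)).Connected)
    (hW2 : 2 ≤ W.card)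
    (hov : ∀ i j : Fin ℓ, (i : ℕ) + 1 = (j : ℕ) → (h i).1 ∩ (h j).1 ⊆ W)
    (hcap : ∀ i : Fin ℓ, 2 ≤ (W ∩ (h i).1).card) :
    (E'.card : ℝ) / ((W.card : ℝ) - 1)
        = (∑ i : Fin ℓ, ((E' ∩ (h i).2).card : ℝ) / ((W.card : ℝ) - 1)) ∧
    (E'.card : ℝ) / ((W.card : ℝ) - 1) ≤ d1 F ∧
    (E'.card : ℝ) / (W.card : ℝ) < d1 F := by
  classical
  have hℓpos : 0 < ℓ := hℓ
  have hWR : (2:ℝ) ≤ (W.card : ℝ) := by exact_mod_cast hW2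
  have hcpos : (0:ℝ) < (W.card : ℝ) - 1 := by linarith
  -- sharing a vertex forces indices to be within 1 of each other
  have key : ∀ i j : Fin ℓ, ∀ x : V, x ∈ (h i).1 → x ∈ (h j).1 →
      (j : ℕ) ≤ (i : ℕ) + 1 := by
    intro i j x hxi hxj
    by_contra hcon
    have hemp := hfar i j (by omega)
    have : x ∈ (∅ : Finset V) := hemp ▸ Finset.mem_inter.mpr ⟨hxi, hxj⟩
    simp at this
  -- the intersection of the vertex sets of two distinct F-edges has at most one vertex
  have hle1 : ∀ i j : Fin ℓ, i ≠ j → ((h i).1 ∩ (h j).1).card ≤ 1 := by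
    intro i j hij
    rcases lt_trichotomy (i : ℕ) (j : ℕ) with hlt | heq | hgt
    · rcases eq_or_lt_of_le (Nat.succ_le_of_lt hlt) with he | hl
      · rw [hconsec i j he]
      · rw [hfar i j (by omega)]; simp
    · exact absurd (Fin.ext heq) hij
    · rw [Finset.inter_comm]
      rcases eq_or_lt_of_le (Nat.succ_le_of_lt hgt) with he | hl
      · rw [hconsec j i he]
      · rw [hfar j i (by omega)]; simp
  -- edge sets of distinct F-edges are disjoint
  have hdisj : ∀ i j : Fin ℓ, i ≠ j → Disjoint (E' ∩ (h i).2) (E' ∩ (h j).2) := by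
    intro i j hij
    rw [Finset.disjoint_left]
    intro e he1 he2
    obtain ⟨-, hei⟩ := Finset.mem_inter.mp he1
    obtain ⟨-, hej⟩ := Finset.mem_inter.mp he2
    obtain ⟨hnd, hmemi⟩ := CPD_copy_edge (hcopies i) hei
    obtain ⟨-, hmemj⟩ := CPD_copy_edge (hcopies j) hej
    revert hnd hmemi hmemj
    induction e using Sym2.ind with
    | _ a b =>
      intro hnd hmemi hmemj
      have hab : a ≠ b := by rwa [Sym2.mk_isDiag_iff] at hnd
      have h2le : 2 ≤ ((h i).1 ∩ (h j).1).card := by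
        apply Finset.one_lt_card.mpr
        refine ⟨a, ?_, b, ?_, hab⟩
        · exact Finset.mem_inter.mpr ⟨hmemi a (Sym2.mem_mk_left _ _),
            hmemj a (Sym2.mem_mk_left _ _)⟩
        · exact Finset.mem_inter.mpr ⟨hmemi b (Sym2.mem_mk_right _ _),
            hmemj b (Sym2.mem_mk_right _ _)⟩
      exact absurd (hle1 i j hij) (by omega)
  -- E' is partitioned by the F-edges
  have hEpart : E' = Finset.univ.biUnion fun i => E' ∩ (h i).2 := by
    ext e
    simp only [Finset.mem_biUnion, Finset.mem_inter, Finset.mem_univ, true_and]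
    constructor
    · intro heE
      obtain ⟨i, -, hi⟩ := Finset.mem_sup.mp (hEsub heE)
      exact ⟨i, heE, hi⟩
    · rintro ⟨i, hi, -⟩
      exact hi
  have hEcard : E'.card = ∑ i : Fin ℓ, (E' ∩ (h i).2).card := by
    conv_lhs => rw [hEpart]
    exact Finset.card_biUnion fun i _ j _ hij => hdisj i j hij
  -- the overlap vertices
  set g : ℕ → Fin ℓ := fun k => ⟨k % ℓ, Nat.mod_lt k hℓpos⟩ with hgdef
  have hg : ∀ k, k < ℓ → ((g k : ℕ)) = k := fun k hk => Nat.mod_eq_of_lt hk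
  set Ov : Finset V :=
    (Finset.range (ℓ - 1)).biUnion fun k => (h (g k)).1 ∩ (h (g (k + 1))).1 with hOvdef
  have hOvsub : Ov ⊆ W := by
    intro x hx
    obtain ⟨k, hk, hxk⟩ := Finset.mem_biUnion.mp hx
    rw [Finset.mem_range] at hk
    exact hov (g k) (g (k + 1)) (by rw [hg k (by omega), hg (k + 1) (by omega)]) hxk
  have hOvcard : Ov.card = ℓ - 1 := by
    rw [hOvdef, Finset.card_biUnion]
    · rw [Finset.sum_congr rfl fun k hk => ?_, Finset.sum_const, smul_eq_mul, mul_one,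
        Finset.card_range]
      rw [Finset.mem_range] at hk
      exact hconsec (g k) (g (k + 1)) (by rw [hg k (by omega), hg (k + 1) (by omega)])
    · intro k hk k' hk' hkk'
      rw [Finset.mem_coe, Finset.mem_range] at hk hk'
      rw [Function.onFun, Finset.disjoint_left]
      intro x hx1 hx2
      obtain ⟨ha1, ha2⟩ := Finset.mem_inter.mp hx1
      obtain ⟨hb1, hb2⟩ := Finset.mem_inter.mp hx2
      rcases Nat.lt_or_ge k k' with hlt | hge
      · have := key (g k) (g (k' + 1)) x ha1 hb2
        rw [hg k (by omega), hg (k' + 1) (by omega)] at this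
        omega
      · have hlt : k' < k := by omega
        have := key (g k') (g (k + 1)) x hb1 ha2
        rw [hg k' (by omega), hg (k + 1) (by omega)] at this
        omega
  -- sharing a vertex in consecutive F-edges puts it in Ov
  have hov' : ∀ x : V, ∀ a b : Fin ℓ, (a : ℕ) + 1 = (b : ℕ) →
      x ∈ (h a).1 → x ∈ (h b).1 → x ∈ Ov := by
    intro x a b hab hxa hxb
    have hka : (a : ℕ) < ℓ - 1 := by have := b.isLt; omega
    apply Finset.mem_biUnion.mpr
    refine ⟨(a : ℕ), Finset.mem_range.mpr hka, ?_⟩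
    have hga : g (a : ℕ) = a := Fin.ext (hg _ (by omega))
    have hgb : g ((a : ℕ) + 1) = b := Fin.ext (by rw [hg _ (by omega)]; omega)
    rw [hga, hgb]
    exact Finset.mem_inter.mpr ⟨hxa, hxb⟩
  -- each vertex of W lies in exactly one or two F-edges
  have hT : ∀ x ∈ W,
      (Finset.univ.filter fun i : Fin ℓ => x ∈ (h i).1).card = if x ∈ Ov then 2 else 1 := by
    intro x hx
    obtain ⟨i0, -, hi0⟩ := Finset.mem_sup.mp (hWsub hx)
    by_cases hxo : x ∈ Ov
    · simp only [hxo, if_true]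
      obtain ⟨k, hk, hxk⟩ := Finset.mem_biUnion.mp hxo
      rw [Finset.mem_range] at hk
      obtain ⟨hx1, hx2⟩ := Finset.mem_inter.mp hxk
      have hgk : ((g k : ℕ)) = k := hg k (by omega)
      have hgk1 : ((g (k + 1) : ℕ)) = k + 1 := hg (k + 1) (by omega)
      have hTset : (Finset.univ.filter fun i : Fin ℓ => x ∈ (h i).1)
          = {g k, g (k + 1)} := by
        ext m
        simp only [Finset.mem_filter, Finset.mem_univ, true_and, Finset.mem_insert,
          Finset.mem_singleton]
        constructor
        · intro hm
          have c1 := key (g k) m x hx1 hm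
          have c2 := key m (g (k + 1)) x hm hx2
          rw [hgk] at c1
          rw [hgk1] at c2
          rcases Nat.eq_or_lt_of_le c2 with he | hl
          · left; refine Fin.ext ?_; rw [hgk]; omega
          · right; refine Fin.ext ?_; rw [hgk1]; omega
        · rintro (rfl | rfl)
          · exact hx1
          · exact hx2
      rw [hTset]
      exact Finset.card_pair
        (by intro hc; have := congrArg Fin.val hc; rw [hgk, hgk1] at this; omega)
    · simp only [hxo, if_false]
      apply le_antisymm
      · apply Finset.card_le_one.mpr
        intro a ha b hb
        rw [Finset.mem_filter] at ha hb
        by_contra hab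
        have hvne : (a : ℕ) ≠ (b : ℕ) := fun hv => hab (Fin.ext hv)
        have c1 := key a b x ha.2 hb.2
        have c2 := key b a x hb.2 ha.2
        rcases Nat.lt_or_ge (a : ℕ) (b : ℕ) with hlt | hge
        · exact hxo (hov' x a b (by omega) ha.2 hb.2)
        · exact hxo (hov' x b a (by omega) hb.2 ha.2)
      · rw [Nat.one_le_iff_ne_zero, ← Nat.pos_iff_ne_zero, Finset.card_pos]
        exact ⟨i0, Finset.mem_filter.mpr ⟨Finset.mem_univ _, hi0⟩⟩
  -- vertex count: ∑ᵢ |W ∩ hᵢ| = |W| + (ℓ - 1)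
  have hsum : ∑ i : Fin ℓ, (W ∩ (h i).1).card = W.card + (ℓ - 1) := by
    have step1 : ∀ i : Fin ℓ, (W ∩ (h i).1).card
        = ∑ x ∈ W, if x ∈ (h i).1 then 1 else 0 := by
      intro i
      have hfe : W ∩ (h i).1 = W.filter fun x => x ∈ (h i).1 := by
        ext x; simp [Finset.mem_filter, Finset.mem_inter]
      rw [hfe, Finset.card_filter]
    calc ∑ i : Fin ℓ, (W ∩ (h i).1).card
        = ∑ i : Fin ℓ, ∑ x ∈ W, if x ∈ (h i).1 then 1 else 0 :=
          Finset.sum_congr rfl fun i _ => step1 i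
      _ = ∑ x ∈ W, ∑ i : Fin ℓ, if x ∈ (h i).1 then 1 else 0 := Finset.sum_comm
      _ = ∑ x ∈ W, (Finset.univ.filter fun i : Fin ℓ => x ∈ (h i).1).card :=
          Finset.sum_congr rfl fun x _ => (Finset.card_filter _ _).symm
      _ = ∑ x ∈ W, if x ∈ Ov then 2 else 1 :=
          Finset.sum_congr rfl fun x hxW => hT x hxW
      _ = ∑ x ∈ W, ((if x ∈ Ov then 1 else 0) + 1) :=
          Finset.sum_congr rfl fun x _ => by split <;> rfl
      _ = (W.filter fun x => x ∈ Ov).card + W.card := by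
          rw [Finset.sum_add_distrib, Finset.sum_const, smul_eq_mul, mul_one,
            Finset.card_filter]
      _ = W.card + (ℓ - 1) := by
          have : W.filter (fun x => x ∈ Ov) = Ov := by
            ext x
            simp only [Finset.mem_filter]
            exact ⟨fun hx => hx.2, fun hx => ⟨hOvsub hx, hx⟩⟩
          rw [this, hOvcard, Nat.add_comm]
  -- per-edge density bounds
  have hper : ∀ i : Fin ℓ, ((E' ∩ (h i).2).card : ℝ)
      ≤ d1 F * (((W ∩ (h i).1).card : ℝ) - 1) :=
    fun i => CPD_per_edge hr hF (hcopies i) hEin (hcap i)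
  have hd1pos : 0 < d1 F := CPD_d1_pos hr hFconn
  -- total bound
  have hsumR : (∑ i : Fin ℓ, ((W ∩ (h i).1).card : ℝ)) = (W.card : ℝ) + ((ℓ : ℝ) - 1) := by
    have hcast := congrArg (Nat.cast (R := ℝ)) hsum
    push_cast [Nat.cast_sub hℓ] at hcast
    push_cast
    linarith
  have h2 : (∑ i : Fin ℓ, ((E' ∩ (h i).2).card : ℝ)) ≤ d1 F * ((W.card : ℝ) - 1) := by
    calc (∑ i : Fin ℓ, ((E' ∩ (h i).2).card : ℝ))
        ≤ ∑ i : Fin ℓ, d1 F * (((W ∩ (h i).1).card : ℝ) - 1) :=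
          Finset.sum_le_sum fun i _ => hper i
      _ = d1 F * (∑ i : Fin ℓ, (((W ∩ (h i).1).card : ℝ) - 1)) := by
          rw [Finset.mul_sum]
      _ = d1 F * ((W.card : ℝ) - 1) := by
          congr 1
          rw [Finset.sum_sub_distrib, hsumR, Finset.sum_const, Finset.card_univ,
            Fintype.card_fin, nsmul_eq_mul, mul_one]
          ring
  have hEcardR : (E'.card : ℝ) = ∑ i : Fin ℓ, ((E' ∩ (h i).2).card : ℝ) := by
    exact_mod_cast congrArg (Nat.cast (R := ℝ)) hEcard
  have hle : (E'.card : ℝ) / ((W.card : ℝ) - 1) ≤ d1 F := by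
    rw [div_le_iff₀ hcpos, hEcardR]
    exact h2
  refine ⟨?_, hle, ?_⟩
  · rw [← Finset.sum_div, hEcardR]
  · -- E' is nonempty since S is connected with at least 2 vertices
    have hE1 : (0:ℝ) < (E'.card : ℝ) := by
      obtain ⟨a, ha, b, hb, hab⟩ := Finset.one_lt_card.mp hW2
      have hne : (⟨a, ha⟩ : (↑W : Set V)) ≠ ⟨b, hb⟩ := by
        intro hc; exact hab (congrArg Subtype.val hc)
      obtain ⟨u, v, huv⟩ := CPD_conn_exists_adj hconn hne
      have : s((u : V), (v : V)) ∈ (↑E' : Set (Sym2 V)) :=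
        ((SimpleGraph.fromEdgeSet_adj _).mp huv).1
      have hpos : 0 < E'.card := Finset.card_pos.mpr ⟨_, this⟩
      exact_mod_cast hpos
    have hstep : (E'.card : ℝ) / (W.card : ℝ) < (E'.card : ℝ) / ((W.card : ℝ) - 1) :=
      div_lt_div_of_pos_left hE1 hcpos (by linarith)
    exact lt_of_lt_of_le hstep hle

end
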